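/- For the cycle C_n on n vertices (n ≥ 4), the maximum cardinality of a convexly independent set equals that of the path on n−1 vertices, i.e., β_c(C_n) = 2·⌊(n−1)/3⌋ + ((n−1) mod 3). -/

import Mathlib

/-- A set `S` of vertices is P3-convex if every vertex outside `S`
has at most one neighbor in `S`. -/
def P3Convex {V : Type*} (G : SimpleGraph V) (S : Set V) : Prop :=
  ∀ x ∉ S, ({y | y ∈ S ∧ G.Adj x y} : Set V).Subsingleton

/-- The P3-convex hull of `A`: the intersection of all P3-convex sets containing `A`. -/
def p3Hull {V : Type*} (G : SimpleGraph V) (A : Set V) : Set V :=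
  ⋂₀ {C : Set V | P3Convex G C ∧ A ⊆ C}

/-- A set `S` is convexly independent if no `x ∈ S` lies in the hull of `S \ {x}`. -/
def ConvIndep {V : Type*} (G : SimpleGraph V) (S : Set V) : Prop :=
  ∀ x ∈ S, x ∉ p3Hull G (S \ {x})

/-- The maximum cardinality of a convexly independent set. -/
noncomputable def betaC {V : Type*} (G : SimpleGraph V) : ℕ :=
  sSup {n | ∃ S : Set V, ConvIndep G S ∧ S.ncard = n}

namespace BetaCAux

open Fin.NatCast Fin.CommRing

variable {m : ℕ}

lemma val_one' : ((1 : Fin (m+4)) : ℕ) = 1 := by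
  rw [show (1 : Fin (m+4)) = ((1:ℕ) : Fin (m+4)) by norm_cast, Fin.val_natCast]
  exact Nat.mod_eq_of_lt (by omega)

lemma val_two' : ((2 : Fin (m+4)) : ℕ) = 2 := by
  rw [show (2 : Fin (m+4)) = ((2:ℕ) : Fin (m+4)) by norm_cast, Fin.val_natCast]
  exact Nat.mod_eq_of_lt (by omega)

lemma add_def' (x : Fin (m+4)) : (x+1).val = (x.val + 1) % (m+4) := by
  simp [Fin.add_def]

lemma sub_def' (x : Fin (m+4)) : (x-1).val = (x.val + (m+3)) % (m+4) := by
  simp [Fin.sub_def]; ring_nf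

lemma adj_add_one (x : Fin (m+4)) : (SimpleGraph.cycleGraph (m+4)).Adj x (x+1) := by
  rw [SimpleGraph.cycleGraph_adj']
  right
  simp [show x + 1 - x = 1 by ring, val_one']

lemma adj_sub_one (x : Fin (m+4)) : (SimpleGraph.cycleGraph (m+4)).Adj x (x-1) := by
  rw [SimpleGraph.cycleGraph_adj']
  left
  simp [show x - (x - 1) = 1 by ring, val_one']

lemma add_one_ne (x : Fin (m+4)) : x + 1 ≠ x := by
  intro h
  have h2 : (1 : Fin (m+4)) = 0 := by
    have := add_left_cancel (a := x) (b := 1) (c := 0) (by simpa using h)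
    exact this
  rw [Fin.ext_iff, val_one'] at h2
  simp at h2

lemma sub_one_ne (x : Fin (m+4)) : x - 1 ≠ x := by
  intro h
  have h2 : (-1 : Fin (m+4)) = 0 := by
    have := add_left_cancel (a := x) (b := -1) (c := 0)
      (by rw [add_zero, ← sub_eq_add_neg]; exact h)
    exact this
  have h3 : (1 : Fin (m+4)) = 0 := by simpa using neg_eq_zero.mp h2
  rw [Fin.ext_iff, val_one'] at h3
  simp at h3

lemma sub_ne_add (x : Fin (m+4)) : x - 1 ≠ x + 1 := by
  intro h
  have h2 : (2 : Fin (m+4)) = 0 := by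
    calc (2 : Fin (m+4)) = x + 1 - (x-1) := by ring
    _ = x + 1 - (x+1) := by rw [h]
    _ = 0 := by ring
  rw [Fin.ext_iff, val_two'] at h2
  simp at h2

lemma adj_cases {x a : Fin (m+4)} (h : (SimpleGraph.cycleGraph (m+4)).Adj x a) :
    a = x - 1 ∨ a = x + 1 := by
  rw [SimpleGraph.cycleGraph_adj'] at h
  rcases h with h | h
  · left
    have h2 : x - a = 1 := Fin.ext (by rw [h, val_one'])
    rw [← h2]; ring
  · right
    have h2 : a - x = 1 := Fin.ext (by rw [h, val_one'])
    rw [← h2]; ring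

lemma mem_hull (A : Set (Fin (m+4))) (x : Fin (m+4)) (h1 : x - 1 ∈ A) (h2 : x + 1 ∈ A) :
    x ∈ p3Hull (SimpleGraph.cycleGraph (m+4)) A := by
  rw [p3Hull, Set.mem_sInter]
  rintro C ⟨hconv, hsub⟩
  by_contra hx
  have := hconv x hx ⟨hsub h1, adj_sub_one x⟩ ⟨hsub h2, adj_add_one x⟩
  exact sub_ne_add x this

lemma nbr_unique {w u a b : Fin (m+4)} (hA : a = w - 1 ∨ a = w + 1)
    (hB : b = w - 1 ∨ b = w + 1) (ha : a ≠ u) (hb : b ≠ u)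
    (hu : u = w - 1 ∨ u = w + 1) : a = b := by
  rcases hu with h | h
  · have ha' : a = w + 1 := hA.resolve_left (fun hh => ha (hh.trans h.symm))
    have hb' : b = w + 1 := hB.resolve_left (fun hh => hb (hh.trans h.symm))
    rw [ha', hb']
  · have ha' : a = w - 1 := hA.resolve_right (fun hh => ha (hh.trans h.symm))
    have hb' : b = w - 1 := hB.resolve_right (fun hh => hb (hh.trans h.symm))
    rw [ha', hb']

lemma not_mem_hull (A : Set (Fin (m+4))) (x y : Fin (m+4))
    (hadj : (SimpleGraph.cycleGraph (m+4)).Adj x y) (hyA : y ∉ A) (hxA : x ∉ A) :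
    x ∉ p3Hull (SimpleGraph.cycleGraph (m+4)) A := by
  intro hx
  rw [p3Hull, Set.mem_sInter] at hx
  have hxC := hx {z | z ≠ x ∧ z ≠ y} ?_
  · exact hxC.1 rfl
  constructor
  · -- P3Convex
    intro w hw a ha b hb
    have hw' : w = x ∨ w = y := by
      by_cases h1 : w = x
      · exact Or.inl h1
      · right
        by_contra h2
        exact hw ⟨h1, h2⟩
    obtain ⟨⟨hax, hay⟩, haAdj⟩ := ha
    obtain ⟨⟨hbx, hby⟩, hbAdj⟩ := hb
    have hA := adj_cases haAdj
    have hB := adj_cases hbAdj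
    have hy := adj_cases hadj
    rcases hw' with hwx | hwy
    · refine nbr_unique hA hB hay hby ?_
      rw [hwx]
      exact hy
    · refine nbr_unique hA hB hax hbx ?_
      rcases hy with h | h
      · right
        rw [hwy, h]; ring
      · left
        rw [hwy, h]; ring
  · -- A subset C
    intro z hz
    exact ⟨fun h => hxA (h ▸ hz), fun h => hyA (h ▸ hz)⟩

lemma convIndep_iff (S : Set (Fin (m+4))) :
    ConvIndep (SimpleGraph.cycleGraph (m+4)) S ↔ ∀ x ∈ S, ¬(x - 1 ∈ S ∧ x + 1 ∈ S) := by
  constructor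
  · intro h x hx hc
    apply h x hx
    exact mem_hull _ x ⟨hc.1, sub_one_ne x⟩ ⟨hc.2, add_one_ne x⟩
  · intro h x hx
    rcases not_and_or.mp (h x hx) with h1 | h2
    · exact not_mem_hull _ x (x-1) (adj_sub_one x)
        (fun hc => h1 hc.1) (fun hc => hc.2 rfl)
    · exact not_mem_hull _ x (x+1) (adj_add_one x)
        (fun hc => h2 hc.1) (fun hc => hc.2 rfl)

lemma nat_bound : ∀ (M : ℕ) (T : Finset ℕ), (∀ i ∈ T, i < M) →
    (∀ i, ¬(i ∈ T ∧ i+1 ∈ T ∧ i+2 ∈ T)) → T.card ≤ 2 * (M/3) + M % 3 := by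
  intro M
  induction M using Nat.strong_induction_on with
  | _ M ih =>
    intro T hsub h3
    rcases lt_or_ge M 3 with hM | hM
    · have hle : T.card ≤ M := by
        calc T.card ≤ (Finset.range M).card :=
          Finset.card_le_card (fun i hi => Finset.mem_range.mpr (hsub i hi))
        _ = M := Finset.card_range M
      omega
    · obtain ⟨M', rfl⟩ : ∃ M', M = M' + 3 := ⟨M - 3, by omega⟩
      have hsplit : (T.filter (fun i => i < M')).card
          + (T.filter (fun i => ¬ i < M')).card = T.card :=
        Finset.card_filter_add_card_filter_not _
      have h1 : (T.filter (fun i => i < M')).card ≤ 2 * (M'/3) + M' % 3 := by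
        apply ih M' (by omega)
        · intro i hi; exact (Finset.mem_filter.mp hi).2
        · intro i hc
          exact h3 i ⟨(Finset.mem_filter.mp hc.1).1, (Finset.mem_filter.mp hc.2.1).1,
            (Finset.mem_filter.mp hc.2.2).1⟩
      have h2 : (T.filter (fun i => ¬ i < M')).card ≤ 2 := by
        have hsub2 : T.filter (fun i => ¬ i < M') ⊆ {M', M'+1, M'+2} := by
          intro i hi
          have hi1 := Finset.mem_filter.mp hi
          have hi2 := hsub i hi1.1
          simp only [Finset.mem_insert, Finset.mem_singleton]
          omega
        by_contra hc
        rw [not_le] at hc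
        have hcard3 : ({M', M'+1, M'+2} : Finset ℕ).card = 3 := by
          rw [Finset.card_insert_of_notMem (by simp),
            Finset.card_insert_of_notMem (by simp), Finset.card_singleton]
        have heq : T.filter (fun i => ¬ i < M') = {M', M'+1, M'+2} :=
          Finset.eq_of_subset_of_card_le hsub2 (by omega)
        have hmem : ∀ j ∈ ({M', M'+1, M'+2} : Finset ℕ), j ∈ T := by
          intro j hj
          rw [← heq] at hj
          exact (Finset.mem_filter.mp hj).1
        exact h3 M' ⟨hmem M' (by simp), hmem (M'+1) (by simp), hmem (M'+2) (by simp)⟩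
      omega

lemma card_bound (F : Finset (Fin (m+4)))
    (hF : ∀ x ∈ F, ¬(x - 1 ∈ F ∧ x + 1 ∈ F)) :
    F.card ≤ 2 * ((m+3) / 3) + (m+3) % 3 := by
  have hex : ∃ a : Fin (m+4), a ∉ F := by
    by_contra hc
    push_neg at hc
    exact hF 0 (hc 0) ⟨hc _, hc _⟩
  obtain ⟨a, ha⟩ := hex
  set T : Finset ℕ := (Finset.range (m+3)).filter
    (fun i => a + ((i+1 : ℕ) : Fin (m+4)) ∈ F) with hT
  have hcast : ∀ k : ℕ, k < m + 4 → ((k : Fin (m+4)) : ℕ) = k := by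
    intro k hk; rw [Fin.val_natCast]; exact Nat.mod_eq_of_lt hk
  have hcard : F.card = T.card := by
    apply Finset.card_nbij' (i := fun x => (x - a).val - 1)
      (j := fun i => a + ((i+1 : ℕ) : Fin (m+4)))
    · -- maps into T
      intro x hx
      have hxa : x ≠ a := fun h => ha (h ▸ hx)
      have hne : x - a ≠ 0 := sub_ne_zero.mpr hxa
      have hv1 : 1 ≤ (x - a).val := by
        rcases Nat.eq_zero_or_pos (x - a).val with h | h
        · exact absurd (Fin.ext (by simp [h])) hne
        · exact h
      have hv2 : (x - a).val < m + 4 := (x - a).isLt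
      simp only [Finset.mem_coe]
      rw [hT, Finset.mem_filter, Finset.mem_range]
      constructor
      · omega
      · have : (x - a).val - 1 + 1 = (x - a).val := by omega
        rw [this, Fin.cast_val_eq_self]
        simpa using hx
    · -- maps into F
      intro i hi
      exact (Finset.mem_filter.mp hi).2
    · -- left inverse
      intro x hx
      have hxa : x ≠ a := fun h => ha (h ▸ hx)
      have hne : x - a ≠ 0 := sub_ne_zero.mpr hxa
      have hv1 : 1 ≤ (x - a).val := by
        rcases Nat.eq_zero_or_pos (x - a).val with h | h
        · exact absurd (Fin.ext (by simp [h])) hne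
        · exact h
      have : (x - a).val - 1 + 1 = (x - a).val := by omega
      dsimp only
      rw [this, Fin.cast_val_eq_self]
      ring
    · -- right inverse
      intro i hi
      have hi' : i < m + 3 := Finset.mem_range.mp (Finset.mem_filter.mp hi).1
      have : (a + ((i+1 : ℕ) : Fin (m+4)) - a) = ((i+1 : ℕ) : Fin (m+4)) := by ring
      dsimp only
      rw [this, hcast (i+1) (by omega)]
      omega
  rw [hcard]
  apply nat_bound (m+3) T
  · intro i hi
    exact Finset.mem_range.mp (Finset.mem_filter.mp hi).1
  · intro i hc
    obtain ⟨c0, c1, c2⟩ := hc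
    have m0 := (Finset.mem_filter.mp c0).2
    have m1 := (Finset.mem_filter.mp c1).2
    have m2 := (Finset.mem_filter.mp c2).2
    apply hF (a + ((i+2 : ℕ) : Fin (m+4))) m1
    constructor
    · have : a + ((i+2 : ℕ) : Fin (m+4)) - 1 = a + ((i+1 : ℕ) : Fin (m+4)) := by
        push_cast
        ring
      rw [this]; exact m0
    · have : a + ((i+2 : ℕ) : Fin (m+4)) + 1 = a + ((i+3 : ℕ) : Fin (m+4)) := by
        push_cast
        ring
      rw [this]
      exact m2
  
lemma count_aux : ∀ N : ℕ, ((Finset.range N).filter (fun i => ¬ i % 3 = 0)).card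
    = N - (N+2)/3 := by
  intro N
  induction N with
  | zero => simp
  | succ k ih =>
    rw [Finset.range_add_one, Finset.filter_insert]
    by_cases h : k % 3 = 0
    · rw [if_neg (by simpa using h)]
      omega
    · rw [if_pos h, Finset.card_insert_of_notMem (by simp)]
      omega

lemma low_card :
    ((Finset.univ.filter (fun x : Fin (m+4) => ¬ x.val % 3 = 0)).card
      = 2 * ((m+3)/3) + (m+3) % 3) := by
  have hbij : (Finset.univ.filter (fun x : Fin (m+4) => ¬ x.val % 3 = 0)).card
      = ((Finset.range (m+4)).filter (fun i => ¬ i % 3 = 0)).card := by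
    apply Finset.card_nbij (i := fun x => x.val)
    · intro x hx
      have := (Finset.mem_filter.mp hx).2
      exact Finset.mem_filter.mpr ⟨Finset.mem_range.mpr x.isLt, this⟩
    · intro x _ y _ h
      exact Fin.ext h
    · intro i hi
      simp only [Finset.coe_filter, Finset.mem_range, Set.mem_setOf_eq] at hi ⊢
      exact ⟨⟨i, hi.1⟩, ⟨by simp, hi.2⟩, rfl⟩
  rw [hbij, count_aux]
  omega

lemma low_no_three (x : Fin (m+4))
    (hx : ¬ x.val % 3 = 0) (h1 : ¬ (x-1).val % 3 = 0) (h2 : ¬ (x+1).val % 3 = 0) :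
    False := by
  have hx0 : x.val ≠ 0 := fun h => hx (by omega)
  have hxlt : x.val < m + 4 := x.isLt
  have hs : (x - 1).val = x.val - 1 := by
    rw [sub_def', show x.val + (m+3) = (m+4) + (x.val - 1) by omega, Nat.add_mod_left]
    exact Nat.mod_eq_of_lt (by omega)
  rcases Nat.lt_or_ge x.val (m+3) with hlt | hge
  · have hadd : (x + 1).val = x.val + 1 := by
      rw [add_def']; exact Nat.mod_eq_of_lt (by omega)
    rw [hs] at h1; rw [hadd] at h2
    omega
  · have hx' : x.val = m + 3 := by omega
    have hadd : (x + 1).val = 0 := by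
      rw [add_def', hx', show m + 3 + 1 = m + 4 by omega, Nat.mod_self]
    rw [hadd] at h2
    omega

end BetaCAux

open BetaCAux in
theorem betaC_cycleGraph (n : ℕ) (hn : 4 ≤ n) :
    betaC (SimpleGraph.cycleGraph n) = 2 * ((n - 1) / 3) + (n - 1) % 3 := by
  obtain ⟨m, rfl⟩ : ∃ m, n = m + 4 := ⟨n - 4, by omega⟩
  have hsub1 : m + 4 - 1 = m + 3 := rfl
  rw [hsub1]
  have hub : ∀ k ∈ {k | ∃ S : Set (Fin (m+4)),
      ConvIndep (SimpleGraph.cycleGraph (m+4)) S ∧ S.ncard = k},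
      k ≤ 2 * ((m+3) / 3) + (m+3) % 3 := by
    rintro k ⟨S, hS, rfl⟩
    have hfin : S.Finite := Set.toFinite S
    rw [Set.ncard_eq_toFinset_card S hfin]
    apply card_bound
    intro x hx hc
    rw [Set.Finite.mem_toFinset] at hx
    rw [Set.Finite.mem_toFinset, Set.Finite.mem_toFinset] at hc
    exact (convIndep_iff S).mp hS x hx hc
  have hmem : (2 * ((m+3) / 3) + (m+3) % 3) ∈ {k | ∃ S : Set (Fin (m+4)),
      ConvIndep (SimpleGraph.cycleGraph (m+4)) S ∧ S.ncard = k} := by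
    refine ⟨↑(Finset.univ.filter (fun x : Fin (m+4) => ¬ x.val % 3 = 0)), ?_, ?_⟩
    · rw [convIndep_iff]
      intro x hx hc
      simp only [Finset.coe_filter, Finset.mem_univ, true_and, Set.mem_setOf_eq] at hx hc
      exact low_no_three x hx hc.1 hc.2
    · rw [Set.ncard_coe_finset, low_card]
  apply le_antisymm
  · exact csSup_le ⟨_, hmem⟩ hub
  · exact le_csSup ⟨_, hub⟩ hmem
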